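/- Let B, C : 𝓚 → 𝓗 be bounded with λ ∈ ρ(A_B) ∩ ρ(A_C), and write R_C = (A_C−λ)⁻¹. Assume there is a bounded operator R̃_C : H → H with range contained in D(T') such that for all y ∈ H: (T' − λ̄)R̃_C y = y, Γ̃₁R̃_C y = C*Γ̃₂R̃_C y, and ⟨R_C x, y⟩_H = ⟨x, R̃_C y⟩_H for all x ∈ H (R̃_C is the adjoint resolvent of Ã_{C*} at λ̄). Let S̄, S̃̄ ⊆ H be subsets such that the linear span of {Γ₂R_C h : h ∈ S̄} is dense in 𝓚 and the linear span of {Γ̃₂R̃_C h̃ : h̃ ∈ S̃̄} is dense in 𝓗. Assume Ran(B − C) is dense in 𝓗 and ker(B − C) = {0}. Then for any two bounded operators N₁, N₂ : 𝓗 → 𝓚 satisfying ⟨S_{λ,C}(Id + (B−C)N₁)(B−C)Γ₂R_C h, h̃⟩_H = ⟨S_{λ,C}(Id + (B−C)N₂)(B−C)Γ₂R_C h, h̃⟩_H for all h ∈ S̄ and h̃ ∈ S̃̄, one has N₁ = N₂. In particular, since Krein's resolvent formula gives (A_B−λ)⁻¹ − (A_C−λ)⁻¹ = S_{λ,C}(Id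 + (B−C)M_B(λ))(B−C)Γ₂(A_C−λ)⁻¹, the operator M_B(λ) is uniquely determined by the difference of the two resolvents paired between S̄ and S̃̄. -/

import Mathlib

open scoped InnerProductSpace

noncomputable section

/-- `R` is the (bounded, everywhere-defined) resolvent of the restriction `A_B` of `T`
to `{u ∈ dT : Γ1 u = B (Γ2 u)}` at the spectral parameter `lam`. -/
structure IsResolventAt {H E F : Type*}
    [NormedAddCommGroup H] [InnerProductSpace ℂ H]
    [NormedAddCommGroup E] [InnerProductSpace ℂ E]
    [NormedAddCommGroup F] [InnerProductSpace ℂ F]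
    (dT : Submodule ℂ H) (T : ↥dT →ₗ[ℂ] H)
    (Γ1 : ↥dT →ₗ[ℂ] E) (Γ2 : ↥dT →ₗ[ℂ] F)
    (B : F →L[ℂ] E) (lam : ℂ) (R : H →L[ℂ] H) : Prop where
  mem : ∀ y : H, R y ∈ dT
  bc : ∀ y : H, Γ1 ⟨R y, mem y⟩ = B (Γ2 ⟨R y, mem y⟩)
  right_inv : ∀ y : H, T ⟨R y, mem y⟩ - lam • R y = y
  left_inv : ∀ u : ↥dT, Γ1 u = B (Γ2 u) → R (T u - lam • (u : H)) = (u : H)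

/-- `S` is the solution operator `S_{lam,B}`: it maps `f` to the unique element of
`ker (T - lam)` with `(Γ1 - B Γ2) (S f) = f`. -/
structure IsSolOp {H E F : Type*}
    [NormedAddCommGroup H] [InnerProductSpace ℂ H]
    [NormedAddCommGroup E] [InnerProductSpace ℂ E]
    [NormedAddCommGroup F] [InnerProductSpace ℂ F]
    (dT : Submodule ℂ H) (T : ↥dT →ₗ[ℂ] H)
    (Γ1 : ↥dT →ₗ[ℂ] E) (Γ2 : ↥dT →ₗ[ℂ] F)
    (B : F →L[ℂ] E) (lam : ℂ) (S : E →ₗ[ℂ] ↥dT) : Prop where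
  in_ker : ∀ f : E, T (S f) = lam • ((S f : H))
  trace : ∀ f : E, Γ1 (S f) - B (Γ2 (S f)) = f
  inv : ∀ u : ↥dT, T u = lam • (u : H) → S (Γ1 u - B (Γ2 u)) = u

/-- If `z` is orthogonal (on the right) to a set with dense span, then `z = 0`. -/
lemma dense_span_inner_zero {E : Type*} [NormedAddCommGroup E] [InnerProductSpace ℂ E]
    (s : Set E) (hd : Dense ((Submodule.span ℂ s : Submodule ℂ E) : Set E))
    (z : E) (hz : ∀ w ∈ s, ⟪ w, z ⟫_ℂ = 0) : z = 0 := by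
  have hker : ((Submodule.span ℂ s : Submodule ℂ E) : Set E)
      ⊆ (LinearMap.ker (innerSL ℂ z : E →ₗ[ℂ] ℂ) : Set E) := by
    refine Submodule.span_le.mpr fun w hw => ?_
    simp only [SetLike.mem_coe, LinearMap.mem_ker, ContinuousLinearMap.coe_coe, innerSL_apply_apply]
    simpa using congrArg (starRingEnd ℂ) (hz w hw)
  have hclosed : IsClosed ((LinearMap.ker (innerSL ℂ z : E →ₗ[ℂ] ℂ) : Submodule ℂ E) : Set E) :=
    ContinuousLinearMap.isClosed_ker _
  have hsub : closure ((Submodule.span ℂ s : Submodule ℂ E) : Set E)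
      ⊆ (LinearMap.ker (innerSL ℂ z : E →ₗ[ℂ] ℂ) : Set E) := hclosed.closure_subset_iff.mpr hker
  rw [hd.closure_eq] at hsub
  have hzz : ⟪ z, z ⟫_ℂ = 0 := by simpa using hsub (Set.mem_univ z)
  exact inner_self_eq_zero.mp hzz

/-- A continuous linear map vanishing on a set with dense span is zero. -/
lemma dense_span_clm_zero {E F : Type*} [NormedAddCommGroup E] [InnerProductSpace ℂ E]
    [NormedAddCommGroup F] [InnerProductSpace ℂ F]
    (s : Set E) (hd : Dense ((Submodule.span ℂ s : Submodule ℂ E) : Set E))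
    (G : E →L[ℂ] F) (hG : ∀ w ∈ s, G w = 0) : G = 0 := by
  have hker : ((Submodule.span ℂ s : Submodule ℂ E) : Set E)
      ⊆ (LinearMap.ker (G : E →ₗ[ℂ] F) : Set E) :=
    Submodule.span_le.mpr fun w hw => by simpa using hG w hw
  have hclosed : IsClosed ((LinearMap.ker (G : E →ₗ[ℂ] F) : Submodule ℂ E) : Set E) :=
    ContinuousLinearMap.isClosed_ker _
  have hsub : closure ((Submodule.span ℂ s : Submodule ℂ E) : Set E)
      ⊆ (LinearMap.ker (G : E →ₗ[ℂ] F) : Set E) := hclosed.closure_subset_iff.mpr hker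
  rw [hd.closure_eq] at hsub
  ext x
  simpa using hsub (Set.mem_univ x)

/-- Uniqueness of the M-function from the difference of two resolvents
paired between (spanning subsets of) the detectable subspaces: with `R_C = (A_C−λ)⁻¹`,
its adjoint `R̃_C`, dense spans of traces, `Ran(B−C)` dense and `ker(B−C) = 0`, any two
bounded `N₁, N₂` producing the same Krein-formula pairings coincide. -/

theorem statement_12
    {H 𝓗 𝓚 : Type*}
    [NormedAddCommGroup H] [InnerProductSpace ℂ H] [CompleteSpace H]
    [NormedAddCommGroup 𝓗] [InnerProductSpace ℂ 𝓗] [CompleteSpace 𝓗]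
    [NormedAddCommGroup 𝓚] [InnerProductSpace ℂ 𝓚] [CompleteSpace 𝓚]
    (dT dT' : Submodule ℂ H)
    (T : ↥dT →ₗ[ℂ] H) (T' : ↥dT' →ₗ[ℂ] H)
    (Γ1 : ↥dT →ₗ[ℂ] 𝓗) (Γ2 : ↥dT →ₗ[ℂ] 𝓚)
    (Γt1 : ↥dT' →ₗ[ℂ] 𝓚) (Γt2 : ↥dT' →ₗ[ℂ] 𝓗)
    (green : ∀ (u : ↥dT) (v : ↥dT'),
      ⟪(v : H), T u⟫_ℂ - ⟪T' v, (u : H)⟫_ℂ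
        = ⟪Γt2 v, Γ1 u⟫_ℂ - ⟪Γt1 v, Γ2 u⟫_ℂ)
    (B C : 𝓚 →L[ℂ] 𝓗) (lam : ℂ)
    (RB : H →L[ℂ] H) (hRB : IsResolventAt dT T Γ1 Γ2 B lam RB)
    (RC : H →L[ℂ] H) (hRC : IsResolventAt dT T Γ1 Γ2 C lam RC)
    (RtC : H →L[ℂ] H)
    (hmem : ∀ y : H, RtC y ∈ dT')
    (hinv : ∀ y : H, T' ⟨RtC y, hmem y⟩ - (starRingEnd ℂ lam) • RtC y = y)
    (hbc : ∀ y : H, Γt1 ⟨RtC y, hmem y⟩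
      = (ContinuousLinearMap.adjoint C) (Γt2 ⟨RtC y, hmem y⟩))
    (hadj : ∀ x y : H, ⟪y, RC x⟫_ℂ = ⟪RtC y, x⟫_ℂ)
    (SC : 𝓗 →ₗ[ℂ] ↥dT) (hSC : IsSolOp dT T Γ1 Γ2 C lam SC)
    (Sbar Stbar : Set H)
    (hdense1 : Dense ((Submodule.span ℂ
      ((fun h : H => Γ2 ⟨RC h, hRC.mem h⟩) '' Sbar) : Submodule ℂ 𝓚) : Set 𝓚))
    (hdense2 : Dense ((Submodule.span ℂ
      ((fun h : H => Γt2 ⟨RtC h, hmem h⟩) '' Stbar) : Submodule ℂ 𝓗) : Set 𝓗))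
    (hBCrange : DenseRange ⇑(B - C))
    (hBCker : LinearMap.ker ((B - C : 𝓚 →L[ℂ] 𝓗) : 𝓚 →ₗ[ℂ] 𝓗) = ⊥)
    (N₁ N₂ : 𝓗 →L[ℂ] 𝓚)
    (heq : ∀ h ∈ Sbar, ∀ ht ∈ Stbar,
      ⟪ht, ((SC ((B - C) (Γ2 ⟨RC h, hRC.mem h⟩)
            + (B - C) (N₁ ((B - C) (Γ2 ⟨RC h, hRC.mem h⟩)))) : H))⟫_ℂ
        = ⟪ht, ((SC ((B - C) (Γ2 ⟨RC h, hRC.mem h⟩)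
            + (B - C) (N₂ ((B - C) (Γ2 ⟨RC h, hRC.mem h⟩)))) : H))⟫_ℂ) :
    N₁ = N₂ := by
  -- Key identity: for any g and y, ⟪y, SC g⟫ = -⟪Γt2 (RtC y), g⟫  (via Green's identity)
  have key : ∀ (g : 𝓗) (y : H),
      ⟪ y, ((SC g : ↥dT) : H) ⟫_ℂ = -⟪ Γt2 ⟨RtC y, hmem y⟩, g ⟫_ℂ := by
    intro g y
    have hg := green (SC g) ⟨RtC y, hmem y⟩
    have hT' : T' ⟨RtC y, hmem y⟩ = y + (starRingEnd ℂ lam) • RtC y :=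
      sub_eq_iff_eq_add.mp (hinv y)
    rw [hSC.in_ker g, hT', hbc y] at hg
    rw [ContinuousLinearMap.adjoint_inner_left, ← inner_sub_right, hSC.trace g] at hg
    rw [inner_smul_right, inner_add_left, inner_smul_left] at hg
    simp only [Complex.conj_conj, Submodule.coe_mk] at hg
    linear_combination -hg
  set D := B - C with hD
  -- Step 1: for each h ∈ Sbar, D ((N₁ - N₂) (D (Γ2 (RC h)))) = 0
  have step1 : ∀ h ∈ Sbar,
      D (N₁ (D (Γ2 ⟨RC h, hRC.mem h⟩)) - N₂ (D (Γ2 ⟨RC h, hRC.mem h⟩))) = 0 := by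
    intro h hh
    refine dense_span_inner_zero _ hdense2 _ ?_
    rintro w ⟨ht, hht, rfl⟩
    have h1 := heq h hh ht hht
    rw [key, key] at h1
    rw [inner_add_right, inner_add_right] at h1
    rw [map_sub, inner_sub_right]
    linear_combination -h1
  -- Step 2: kernel of D trivial, so (N₁ - N₂) (D (Γ2 (RC h))) = 0
  have step2 : ∀ h ∈ Sbar,
      (N₁ - N₂) (D (Γ2 ⟨RC h, hRC.mem h⟩)) = 0 := by
    intro h hh
    have := step1 h hh
    have hk : N₁ (D (Γ2 ⟨RC h, hRC.mem h⟩)) - N₂ (D (Γ2 ⟨RC h, hRC.mem h⟩))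
        ∈ LinearMap.ker (D : 𝓚 →ₗ[ℂ] 𝓗) := this
    rw [hBCker, Submodule.mem_bot] at hk
    simpa [ContinuousLinearMap.sub_apply] using hk
  -- Step 3: (N₁ - N₂) ∘ D = 0 from density of the Γ2-traces
  have step3 : (N₁ - N₂).comp D = 0 := by
    refine dense_span_clm_zero _ hdense1 _ ?_
    rintro w ⟨h, hh, rfl⟩
    exact step2 h hh
  -- Step 4: conclude from dense range of D
  have step4 : ⇑(N₁ - N₂) = ⇑(0 : 𝓗 →L[ℂ] 𝓚) := by
    refine hBCrange.equalizer (N₁ - N₂).continuous (0 : 𝓗 →L[ℂ] 𝓚).continuous ?_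
    funext x
    simpa using congrArg (fun G : 𝓚 →L[ℂ] 𝓚 => G x) step3
  have h0 : N₁ - N₂ = 0 := ContinuousLinearMap.ext fun x => by
    simpa using congrFun step4 x
  exact sub_eq_zero.mp h0
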